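/- Let h > 1, c ≠ 0, and d_h = (h−1)^{h/(h−1)}/h. Define u(x,t) = (d_h/|c|) [c² t − c x·ν]_+^{h/(h−1)} for a fixed unit vector ν ∈ ℝ^d. Then at every (x,t) with c² t − c x·ν > 0, u is C² and satisfies u_t = |Du|^{h−3} ⟨D²u Du, Du⟩; moreover u is C¹ on all of ℝ^d × ℝ with u_t and Du vanishing on the hyperplane {c² t = c x·ν}. -/

import Mathlib

open Set

variable {d : ℕ}

-- The `h`-homogeneous infinity-Laplacian `Δ_∞^h f (x) = |Df|^{h-3} ⟨D²f Df, Df⟩`,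
-- with the convention that it is `0` where the gradient vanishes.
open Classical in
noncomputable def infLapH (h : ℝ) (f : EuclideanSpace ℝ (Fin d) → ℝ)
    (x : EuclideanSpace ℝ (Fin d)) : ℝ :=
  if gradient f x = 0 then 0
  else ‖gradient f x‖ ^ (h - 3) *
    (inner ℝ ((fderiv ℝ (gradient f) x) (gradient f x)) (gradient f x) : ℝ)

-- `u` satisfies `u_t = Δ_∞^h u` at the point `p = (x,t)`.
noncomputable def solvesAt (h : ℝ) (u : EuclideanSpace ℝ (Fin d) × ℝ → ℝ)
    (p : EuclideanSpace ℝ (Fin d) × ℝ) : Prop :=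
  deriv (fun τ => u (p.1, τ)) p.2 = infLapH h (fun x => u (x, p.2)) p.1



section Aux
open Real
lemma phi_hasDerivAt (α : ℝ) (hα : 1 < α) (z : ℝ) :
    HasDerivAt (fun z : ℝ => max z 0 ^ α) (α * max z 0 ^ (α-1)) z := by
  rcases lt_trichotomy z 0 with hz | hz | hz
  · have : α * max z 0 ^ (α-1) = 0 := by
      rw [max_eq_right hz.le, Real.zero_rpow (by linarith), mul_zero]
    rw [this]
    apply (hasDerivAt_const z (0:ℝ)).congr_of_eventuallyEq
    filter_upwards [eventually_lt_nhds hz] with y hy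
    rw [max_eq_right hy.le, Real.zero_rpow (by positivity)]
  · subst hz
    have hd : α * max (0:ℝ) 0 ^ (α-1) = 0 := by
      simp [Real.zero_rpow (show α - 1 ≠ 0 by linarith)]
    rw [hd]
    have h1 : HasDerivWithinAt (fun z : ℝ => max z 0 ^ α) 0 (Ici 0) 0 := by
      have h0 := (Real.hasDerivAt_rpow_const (p := α) (x := (0:ℝ)) (Or.inr hα.le)).hasDerivWithinAt (s := Ici (0:ℝ))
      have h0' : HasDerivWithinAt (fun z : ℝ => z ^ α) 0 (Ici (0:ℝ)) 0 := by
        exact h0.congr_deriv (by rw [Real.zero_rpow (show α - 1 ≠ 0 by linarith), mul_zero])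
      refine h0'.congr (fun y hy => ?_) ?_
      · rw [max_eq_left (mem_Ici.mp hy)]
      · simp
    have h2 : HasDerivWithinAt (fun z : ℝ => max z 0 ^ α) 0 (Iic 0) 0 := by
      refine (hasDerivWithinAt_const (0:ℝ) _ (0:ℝ)).congr (fun y hy => ?_) ?_
      · rw [max_eq_right (mem_Iic.mp hy), Real.zero_rpow (show α ≠ 0 by linarith)]
      · simp [Real.zero_rpow (show α ≠ 0 by linarith)]
    have h3 := h2.union h1
    rwa [Iic_union_Ici, hasDerivWithinAt_univ] at h3
  · apply ((Real.hasDerivAt_rpow_const (p := α) (x := z) (Or.inl hz.ne')).congr_of_eventuallyEq ?_).congr_deriv ?_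
    · filter_upwards [eventually_gt_nhds hz] with y hy
      rw [max_eq_left hy.le]
    · rw [max_eq_left hz.le]

lemma phi_contDiff (α : ℝ) (hα : 1 < α) : ContDiff ℝ 1 (fun z : ℝ => max z 0 ^ α) := by
  rw [contDiff_one_iff_deriv]
  constructor
  · exact fun z => (phi_hasDerivAt α hα z).differentiableAt
  · have : deriv (fun z : ℝ => max z 0 ^ α) = fun z => α * max z 0 ^ (α-1) :=
      funext fun z => (phi_hasDerivAt α hα z).deriv
    rw [this]
    refine continuous_const.mul ?_
    rw [continuous_iff_continuousAt]
    intro z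
    exact (Real.continuousAt_rpow_const _ _ (Or.inr (by linarith))).comp
      ((continuous_id.max continuous_const).continuousAt)

lemma t_deriv_aux (K α b c2 : ℝ) (hα : 1 < α) (τ : ℝ) :
    HasDerivAt (fun τ => K * max (c2 * τ - b) 0 ^ α)
      (K * (α * max (c2 * τ - b) 0 ^ (α-1)) * c2) τ := by
  have hℓ : HasDerivAt (fun τ : ℝ => c2 * τ - b) c2 τ := by
    simpa using ((hasDerivAt_id τ).const_mul c2).sub_const b
  have hφ := ((phi_hasDerivAt α hα (c2 * τ - b)).const_mul K)
  exact HasDerivAt.comp (h := fun τ : ℝ => c2 * τ - b) τ hφ hℓ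

lemma grad_aux {d : ℕ} (K α a c : ℝ) (hα : 1 < α) (ν : EuclideanSpace ℝ (Fin d))
    (x : EuclideanSpace ℝ (Fin d)) :
    HasGradientAt (fun x : EuclideanSpace ℝ (Fin d) => K * max (a - c * (inner ℝ x ν : ℝ)) 0 ^ α)
      ((K * (α * max (a - c * (inner ℝ x ν : ℝ)) 0 ^ (α-1)) * (-c)) • ν) x := by
  have hinner : HasFDerivAt (fun x : EuclideanSpace ℝ (Fin d) => (inner ℝ x ν : ℝ))
      (innerSL ℝ ν) x := by
    have he : (fun x : EuclideanSpace ℝ (Fin d) => (inner ℝ x ν : ℝ))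
        = fun x => (innerSL ℝ ν) x := funext fun y => by
      simp only [innerSL_apply_apply]; exact real_inner_comm ν y
    rw [he]; exact (innerSL ℝ ν).hasFDerivAt
  have hℓ : HasFDerivAt (fun x : EuclideanSpace ℝ (Fin d) => a - c * (inner ℝ x ν : ℝ))
      (-(c • innerSL ℝ ν)) x := by
    exact ((hasFDerivAt_const a x).sub (hinner.const_mul c)).congr_fderiv (by simp)
  have hφ := (phi_hasDerivAt α hα (a - c * (inner ℝ x ν : ℝ))).const_mul K
  have hcomp := hφ.comp_hasFDerivAt x hℓ
  rw [hasGradientAt_iff_hasFDerivAt]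
  have heq : (InnerProductSpace.toDual ℝ (EuclideanSpace ℝ (Fin d)))
        ((K * (α * max (a - c * (inner ℝ x ν : ℝ)) 0 ^ (α-1)) * (-c)) • ν)
      = (K * (α * max (a - c * (inner ℝ x ν : ℝ)) 0 ^ (α-1))) • -(c • innerSL ℝ ν) := by
    ext v
    simp [inner_smul_left, real_inner_comm]
    ring
  rw [heq]
  exact hcomp

lemma scalar_key (h c t : ℝ) (hh : 1 < h) (hc : c ≠ 0) (ht : 0 < t) :
    ((h-1)^(h/(h-1))/h/|c|) * (h/(h-1) * t^(h/(h-1)-1)) * c^2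
      = (((h-1)^(h/(h-1))/h/|c|) * (h/(h-1)) * |c| * t^(h/(h-1)-1))^(h-3)
        * (((h-1)^(h/(h-1))/h/|c|)^3 * (h/(h-1))^3 * (h/(h-1)-1) * c^4
            * t^(3*(h/(h-1))-4)) := by
  have hP : (0:ℝ) < h - 1 := by linarith
  have hh0 : (0:ℝ) < h := by linarith
  have hcpos : (0:ℝ) < |c| := abs_pos.mpr hc
  have hα : (0:ℝ) < h/(h-1) := by positivity
  have hγeq : h/(h-1) - 1 = 1/(h-1) := by field_simp; ring
  have hγ : (0:ℝ) < h/(h-1) - 1 := by rw [hγeq]; positivity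
  have hK : (0:ℝ) < (h-1)^(h/(h-1))/h/|c| := by positivity
  have hbig : (0:ℝ) < ((h-1)^(h/(h-1))/h/|c|) * (h/(h-1)) * |c| * t^(h/(h-1)-1) := by positivity
  have hLHS : (0:ℝ) < ((h-1)^(h/(h-1))/h/|c|) * (h/(h-1) * t^(h/(h-1)-1)) * c^2 := by
    have hc2 : (0:ℝ) < c^2 := by positivity
    positivity
  have hRHS : (0:ℝ) < (((h-1)^(h/(h-1))/h/|c|) * (h/(h-1)) * |c| * t^(h/(h-1)-1))^(h-3)
        * (((h-1)^(h/(h-1))/h/|c|)^3 * (h/(h-1))^3 * (h/(h-1)-1) * c^4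
            * t^(3*(h/(h-1))-4)) := by
    have h2 : (0:ℝ) < c^4 := by positivity
    have h3 : (0:ℝ) < ((h-1)^(h/(h-1))/h/|c|)^3 * (h/(h-1))^3 * (h/(h-1)-1) * c^4
            * t^(3*(h/(h-1))-4) := by positivity
    exact mul_pos (Real.rpow_pos_of_pos hbig _) h3
  have hT : (0:ℝ) < t ^ ((1:ℝ)/(h-1)) := Real.rpow_pos_of_pos ht _
  have hT3 : (0:ℝ) < t ^ (3*(h/(h-1))-4) := Real.rpow_pos_of_pos ht _
  rw [← Real.exp_log hLHS, ← Real.exp_log hRHS]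
  congr 1
  rw [hγeq] at *
  rw [Real.log_mul (mul_ne_zero hK.ne' (mul_ne_zero hα.ne' hT.ne')) (pow_ne_zero 2 hc),
    Real.log_mul hK.ne' (mul_ne_zero hα.ne' hT.ne'),
    Real.log_mul hα.ne' hT.ne',
    Real.log_mul (Real.rpow_pos_of_pos hbig _).ne' (by positivity),
    Real.log_rpow hbig,
    Real.log_mul (mul_ne_zero (mul_ne_zero hK.ne' hα.ne') hcpos.ne') hT.ne',
    Real.log_mul (mul_ne_zero hK.ne' hα.ne') hcpos.ne',
    Real.log_mul hK.ne' hα.ne',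
    Real.log_mul (by positivity) hT3.ne',
    Real.log_mul (by positivity) (pow_ne_zero 4 hc),
    Real.log_mul (by positivity) hγ.ne',
    Real.log_mul (pow_ne_zero 3 hK.ne') (pow_ne_zero 3 hα.ne'),
    Real.log_pow, Real.log_pow, Real.log_pow,
    Real.log_rpow ht, Real.log_rpow ht,
    Real.log_div (by positivity) hcpos.ne', Real.log_div (by positivity) hh0.ne',
    Real.log_rpow hP,
    Real.log_div hh0.ne' hP.ne', Real.log_div one_ne_zero hP.ne',
    Real.log_abs, Real.log_one]
  field_simp
  simp only [Real.log_pow, Nat.cast_ofNat]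
  ring

end Aux

theorem stmt_12 (h c : ℝ) (hh : 1 < h) (hc : c ≠ 0)
    (ν : EuclideanSpace ℝ (Fin d)) (hν : ‖ν‖ = 1)
    (u : EuclideanSpace ℝ (Fin d) × ℝ → ℝ)
    (hu : ∀ p, u p = ((h-1) ^ (h/(h-1)) / h / |c|) *
      (max (c^2 * p.2 - c * (inner ℝ p.1 ν : ℝ)) 0) ^ (h/(h-1))) :
    ContDiff ℝ 1 u ∧
    (∀ p : EuclideanSpace ℝ (Fin d) × ℝ, 0 < c^2 * p.2 - c * (inner ℝ p.1 ν : ℝ) →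
      ContDiffAt ℝ 2 u p ∧ solvesAt h u p) ∧
    (∀ p : EuclideanSpace ℝ (Fin d) × ℝ, c^2 * p.2 = c * (inner ℝ p.1 ν : ℝ) →
      deriv (fun τ => u (p.1, τ)) p.2 = 0 ∧ gradient (fun x => u (x, p.2)) p.1 = 0) := by
  have hP : (0:ℝ) < h - 1 := by linarith
  have hα : 1 < h/(h-1) := by rw [lt_div_iff₀ hP]; linarith
  set K : ℝ := (h-1) ^ (h/(h-1)) / h / |c| with hKdef
  have hcpos : (0:ℝ) < |c| := abs_pos.mpr hc
  have hK : 0 < K := by rw [hKdef]; positivity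
  have hν0 : ν ≠ 0 := by intro h0; rw [h0, norm_zero] at hν; norm_num at hν
  have hu' : u = fun p => K * max (c^2 * p.2 - c * (inner ℝ p.1 ν : ℝ)) 0 ^ (h/(h-1)) :=
    funext hu
  have hL : ContDiff ℝ 2 (fun p : EuclideanSpace ℝ (Fin d) × ℝ =>
      c^2 * p.2 - c * (inner ℝ p.1 ν : ℝ)) :=
    (contDiff_const.mul contDiff_snd).sub
      (contDiff_const.mul (ContDiff.inner ℝ contDiff_fst contDiff_const))
  refine ⟨?_, ?_, ?_⟩
  · rw [hu']
    exact contDiff_const.mul ((phi_contDiff _ hα).comp (hL.of_le (by norm_num)))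
  · intro p hp
    constructor
    · -- ContDiffAt 2
      have hopen : IsOpen {q : EuclideanSpace ℝ (Fin d) × ℝ |
          0 < c^2 * q.2 - c * (inner ℝ q.1 ν : ℝ)} := isOpen_lt continuous_const hL.continuous
      have hsm : ContDiffAt ℝ 2 (fun q : EuclideanSpace ℝ (Fin d) × ℝ =>
          K * (c^2 * q.2 - c * (inner ℝ q.1 ν : ℝ)) ^ (h/(h-1))) p :=
        contDiffAt_const.mul
          (ContDiffAt.comp (f := fun q : EuclideanSpace ℝ (Fin d) × ℝ => c^2 * q.2 - c * (inner ℝ q.1 ν : ℝ)) p (Real.contDiffAt_rpow_const_of_ne hp.ne') hL.contDiffAt)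
      refine hsm.congr_of_eventuallyEq ?_
      filter_upwards [hopen.mem_nhds hp] with q hq
      rw [hu q, max_eq_left (le_of_lt hq)]
    · -- solvesAt
      have hs : (0:ℝ) < c^2 * p.2 - c * (inner ℝ p.1 ν : ℝ) := hp
      have heqt : (fun τ => u (p.1, τ))
          = fun τ => K * max (c^2 * τ - c * (inner ℝ p.1 ν : ℝ)) 0 ^ (h/(h-1)) :=
        funext fun τ => hu _
      have heqx : (fun x => u (x, p.2))
          = fun x => K * max (c^2 * p.2 - c * (inner ℝ x ν : ℝ)) 0 ^ (h/(h-1)) :=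
        funext fun x => hu _
      have hgradf : gradient (fun x => u (x, p.2))
          = fun x => (K * ((h/(h-1)) * max (c^2*p.2 - c*(inner ℝ x ν : ℝ)) 0 ^ (h/(h-1)-1))
              * (-c)) • ν := by
        rw [heqx]
        exact gradient_eq (fun x => grad_aux K _ (c^2*p.2) c hα ν x)
      -- abbreviations
      set α : ℝ := h/(h-1) with hαdef
      set s : ℝ := c^2 * p.2 - c * (inner ℝ p.1 ν : ℝ) with hsdef
      set b : ℝ := K * (α * s ^ (α-1)) * (-c) with hbdef
      have hb : b ≠ 0 := by
        rw [hbdef]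
        have h1 : (0:ℝ) < s ^ (α-1) := Real.rpow_pos_of_pos hs _
        have h2 : (0:ℝ) < α := by linarith
        intro hz
        rcases mul_eq_zero.mp hz with hz | hz
        · rcases mul_eq_zero.mp hz with hz | hz
          · exact hK.ne' hz
          · rcases mul_eq_zero.mp hz with hz | hz
            · exact h2.ne' hz
            · exact h1.ne' hz
        · exact hc (by linarith [neg_eq_zero.mp hz])
      have hgp : gradient (fun x => u (x, p.2)) p.1 = b • ν := by
        rw [hgradf]
        simp only [← hsdef, max_eq_left hs.le, hbdef]
      -- fderiv of the gradient near p.1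
      have hinner : HasFDerivAt (fun x : EuclideanSpace ℝ (Fin d) => (inner ℝ x ν : ℝ))
          (innerSL ℝ ν) p.1 := by
        have he : (fun x : EuclideanSpace ℝ (Fin d) => (inner ℝ x ν : ℝ))
            = fun x => (innerSL ℝ ν) x := funext fun y => by
          simp only [innerSL_apply_apply]; exact real_inner_comm ν y
        rw [he]; exact (innerSL ℝ ν).hasFDerivAt
      have hℓ : HasFDerivAt (fun x : EuclideanSpace ℝ (Fin d) =>
            c^2*p.2 - c * (inner ℝ x ν : ℝ)) (-(c • innerSL ℝ ν)) p.1 := by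
        exact ((hasFDerivAt_const (c^2*p.2) p.1).sub (hinner.const_mul c)).congr_fderiv (by simp)
      set m : ℝ := K * (α * ((α-1) * s ^ (α-1-1))) * (-c) with hmdef
      have hpow : HasDerivAt (fun z : ℝ => K * (α * z ^ (α-1)) * (-c)) m s := by
        rw [hmdef]
        exact (((Real.hasDerivAt_rpow_const (p := α-1)
          (Or.inl hs.ne')).const_mul α).const_mul K).mul_const (-c)
      have hg : HasFDerivAt (fun x : EuclideanSpace ℝ (Fin d) =>
            K * (α * (c^2*p.2 - c * (inner ℝ x ν : ℝ)) ^ (α-1)) * (-c))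
          (m • (-(c • innerSL ℝ ν))) p.1 := HasDerivAt.comp_hasFDerivAt (f := fun x : EuclideanSpace ℝ (Fin d) => c^2*p.2 - c * (inner ℝ x ν : ℝ)) p.1 hpow hℓ
      have hGs : HasFDerivAt (fun x : EuclideanSpace ℝ (Fin d) =>
            (K * (α * (c^2*p.2 - c * (inner ℝ x ν : ℝ)) ^ (α-1)) * (-c)) • ν)
          ((m • (-(c • innerSL ℝ ν))).smulRight ν) p.1 := hg.smul_const ν
      have hopenx : IsOpen {x : EuclideanSpace ℝ (Fin d) |
          0 < c^2*p.2 - c * (inner ℝ x ν : ℝ)} := by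
        apply isOpen_lt continuous_const
        exact continuous_const.sub (continuous_const.mul
          (Continuous.inner continuous_id continuous_const))
      have hev : (gradient (fun x => u (x, p.2)))
          =ᶠ[nhds p.1] (fun x : EuclideanSpace ℝ (Fin d) =>
            (K * (α * (c^2*p.2 - c * (inner ℝ x ν : ℝ)) ^ (α-1)) * (-c)) • ν) := by
        filter_upwards [hopenx.mem_nhds hs] with x hx
        rw [hgradf]
        simp only [max_eq_left (le_of_lt hx)]
      have hfd : fderiv ℝ (gradient (fun x => u (x, p.2))) p.1
          = (m • (-(c • innerSL ℝ ν))).smulRight ν := by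
        rw [hev.fderiv_eq, hGs.fderiv]
      -- put everything together
      unfold solvesAt
      rw [heqt, (t_deriv_aux K α (c * (inner ℝ p.1 ν : ℝ)) (c^2) hα p.2).deriv]
      rw [infLapH, if_neg (by rw [hgp]; exact smul_ne_zero hb hν0)]
      rw [hgp, hfd]
      rw [← hsdef, max_eq_left hs.le]
      simp only [ContinuousLinearMap.smulRight_apply, ContinuousLinearMap.smul_apply,
        ContinuousLinearMap.neg_apply, innerSL_apply_apply, inner_smul_left, inner_smul_right,
        real_inner_smul_left, real_inner_smul_right, real_inner_self_eq_norm_sq,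
        norm_smul, Real.norm_eq_abs, hν, mul_one, one_pow, conj_trivial, smul_eq_mul,
        neg_neg, mul_neg, neg_mul]
      have habs : |b| = K * (α * s ^ (α-1)) * |c| := by
        rw [hbdef, abs_mul, abs_neg, abs_of_pos
          (by positivity : (0:ℝ) < K * (α * s ^ (α-1)))]
      rw [habs]
      have hkey := scalar_key h c s hh hc hs
      rw [← hαdef] at hkey
      calc K * (α * s ^ (α-1)) * c^2
          = (K * α * |c| * s^(α-1))^(h-3)
            * (K^3 * α^3 * (α-1) * c^4 * s^(3*α-4)) := hkey
        _ = _ := by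
            have hsplit : s ^ (3*α-4) = s^(α-1-1) * s^(α-1) * s^(α-1) := by
              rw [← Real.rpow_add hs, ← Real.rpow_add hs]
              ring_nf
            rw [show K * α * |c| * s^(α-1) = K * (α * s^(α-1)) * |c| by ring, hsplit]
            rw [hmdef, hbdef]
            ring
  · intro p hp
    have hL0 : c^2 * p.2 - c * (inner ℝ p.1 ν : ℝ) = 0 := by rw [hp]; ring
    constructor
    · have heq : (fun τ => u (p.1, τ))
          = fun τ => K * max (c^2 * τ - c * (inner ℝ p.1 ν : ℝ)) 0 ^ (h/(h-1)) :=
        funext fun τ => hu _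
      rw [heq, (t_deriv_aux K (h/(h-1)) (c * (inner ℝ p.1 ν : ℝ)) (c^2) hα p.2).deriv, hL0]
      rw [max_self, Real.zero_rpow (by linarith)]
      ring
    · have heq : (fun x => u (x, p.2))
          = fun x => K * max (c^2 * p.2 - c * (inner ℝ x ν : ℝ)) 0 ^ (h/(h-1)) :=
        funext fun x => hu _
      rw [heq, (grad_aux K (h/(h-1)) (c^2*p.2) c hα ν p.1).gradient, hL0]
      rw [max_self, Real.zero_rpow (by linarith)]
      simp
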